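/- Covering lemma for finite-dimensional normed spaces: for any finite-dimensional normed vector space (ℝ^m, ‖·‖), there exist finitely many sets A₁,…,A_c with ℝ^m = A₁ ∪ … ∪ A_c such that for every i and all x, y ∈ Aᵢ, ‖y‖ > ‖x‖ implies ‖y − x‖ < ‖y‖. -/

import Mathlib

open Metric Set

/-- Covering lemma for finite-dimensional normed spaces: the space can be covered by
finitely many cones `A i` such that within each cone, the longer of two vectors is
farther from the origin than from the other vector. -/
theorem covering_lemma_cones
    {E : Type*} [NormedAddCommGroup E] [NormedSpace ℝ E] [FiniteDimensional ℝ E] :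
    ∃ (c : ℕ) (A : Fin c → Set E),
      (⋃ i, A i) = Set.univ ∧
      ∀ i : Fin c, ∀ x ∈ A i, ∀ y ∈ A i, ‖y‖ > ‖x‖ → ‖y - x‖ < ‖y‖ := by
  obtain ⟨t, ht⟩ := (isCompact_sphere (0:E) 1).elim_finite_subcover
    (fun u : E => ball u (1/2)) (fun u => isOpen_ball)
    (fun x hx => Set.mem_iUnion.2 ⟨x, by simp⟩)
  set C : E → Set E := fun u => {v | v ≠ 0 ∧ ‖‖v‖⁻¹ • v - u‖ < 1/2} with hC
  have key : ∀ u, ∀ x ∈ C u, ∀ y ∈ C u, ‖y‖ > ‖x‖ → ‖y - x‖ < ‖y‖ := by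
    intro u x hx y hy hxy
    obtain ⟨hx0, hxu⟩ := hx
    obtain ⟨hy0, hyu⟩ := hy
    have hxn : (0:ℝ) < ‖x‖ := norm_pos_iff.2 hx0
    have hyn : (0:ℝ) < ‖y‖ := norm_pos_iff.2 hy0
    set a := ‖x‖⁻¹ • x with ha
    set b := ‖y‖⁻¹ • y with hb
    have hxa : ‖x‖ • a = x := by rw [ha, smul_smul, mul_inv_cancel₀ hxn.ne', one_smul]
    have hyb : ‖y‖ • b = y := by rw [hb, smul_smul, mul_inv_cancel₀ hyn.ne', one_smul]
    have hbn : ‖b‖ = 1 := by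
      rw [hb, norm_smul, norm_inv, norm_norm, inv_mul_cancel₀ hyn.ne']
    have hab : ‖b - a‖ < 1 := by
      calc ‖b - a‖ ≤ ‖b - u‖ + ‖u - a‖ := norm_sub_le_norm_sub_add_norm_sub b u a
        _ < 1/2 + 1/2 := by
            refine add_lt_add hyu ?_
            rw [norm_sub_rev]; exact hxu
        _ = 1 := by norm_num
    have h1 : (‖y‖ - ‖x‖) • b + ‖x‖ • (b - a) = ‖y‖ • b - ‖x‖ • a := by module
    calc ‖y - x‖ = ‖(‖y‖ - ‖x‖) • b + ‖x‖ • (b - a)‖ := by rw [h1, hxa, hyb]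
      _ ≤ ‖(‖y‖ - ‖x‖) • b‖ + ‖‖x‖ • (b - a)‖ := norm_add_le _ _
      _ = (‖y‖ - ‖x‖) * 1 + ‖x‖ * ‖b - a‖ := by
          rw [norm_smul (‖y‖ - ‖x‖) b, norm_smul ‖x‖ (b - a), hbn,
            Real.norm_of_nonneg (by linarith : (0:ℝ) ≤ ‖y‖ - ‖x‖),
            Real.norm_of_nonneg hxn.le]
      _ < (‖y‖ - ‖x‖) * 1 + ‖x‖ * 1 := by
          refine (add_lt_add_iff_left _).2 ?_
          exact mul_lt_mul_of_pos_left hab hxn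
      _ = ‖y‖ := by ring
  refine ⟨t.card + 1, fun i => if h : (i : ℕ) < t.card then
      C (t.toList.get ⟨i, by simpa using h⟩) else {0}, ?_, ?_⟩
  · apply Set.eq_univ_of_forall
    intro v
    rcases eq_or_ne v 0 with rfl | hv
    · refine Set.mem_iUnion.2 ⟨Fin.last t.card, ?_⟩
      simp
    · have hvn : (0:ℝ) < ‖v‖ := norm_pos_iff.2 hv
      have hsph : ‖v‖⁻¹ • v ∈ sphere (0:E) 1 := by
        simp [norm_smul, abs_of_pos (inv_pos.2 hvn), inv_mul_cancel₀ hvn.ne']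
      obtain ⟨u, hut, hu⟩ := Set.mem_iUnion₂.1 (ht hsph)
      obtain ⟨j, hj⟩ := List.mem_iff_get.1 (Finset.mem_toList.2 hut)
      have hjlt : (j : ℕ) < t.card := by
        have := j.isLt; simpa using this
      refine Set.mem_iUnion.2 ⟨⟨j, by omega⟩, ?_⟩
      rw [dif_pos (by simpa using hjlt)]
      refine ⟨hv, ?_⟩
      have : t.toList.get ⟨j, by simpa using hjlt⟩ = u := by
        simpa using hj
      rw [this]
      simpa [dist_eq_norm] using hu
  · intro i x hx y hy hxy
    by_cases h : (i : ℕ) < t.card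
    · simp only [dif_pos h] at hx hy
      exact key _ x hx y hy hxy
    · simp only [dif_neg h] at hx hy
      simp only [Set.mem_singleton_iff] at hx hy
      subst hx; subst hy
      exact absurd hxy (lt_irrefl _)
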